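/- Let C be a finite family of flats of a matroid M with |C| > 1. Then there exists a finite family C' of flats of M with |C'| = |C|, Δ(C') ≥ Δ(C), and such that every member F of C' satisfies F ⊆ cl(⋃(C' \ {F})), i.e. each flat in C' is contained in the closure of the union of the other members of C'. -/

import Mathlib

/-- A matroid on a finite ground set `N`, given by an integer-valued rank
function satisfying the standard rank axioms. -/
structure FinMatroid (N : Type) [Fintype N] [DecidableEq N] where
  r : Finset N → ℤ
  r_nonneg : ∀ A, 0 ≤ r A
  r_le_card : ∀ A, r A ≤ (A.card : ℤ)
  r_mono : ∀ ⦃A B : Finset N⦄, A ⊆ B → r A ≤ r B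
  submodular : ∀ A B, r (A ∪ B) + r (A ∩ B) ≤ r A + r B

namespace FinMatroid

variable {N : Type} [Fintype N] [DecidableEq N]

/-- A set `F` is a flat if adding any element outside of `F` increases the rank. -/
def IsFlat (M : FinMatroid N) (F : Finset N) : Prop :=
  ∀ n ∉ F, M.r F < M.r (insert n F)

instance (M : FinMatroid N) (F : Finset N) : Decidable (M.IsFlat F) := by
  unfold IsFlat; infer_instance

/-- The Δ function of a (multi-indexed) family of sets: `Δ(C) = Σ_{S ⊆ I} (−1)^{|S|} r(F_S)`,
where `F_S` is the intersection of the members indexed by `S` for nonempty `S`, and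
`F_∅` is the union of all members of the family. -/
def delta (M : FinMatroid N) {ι : Type} [Fintype ι] [DecidableEq ι]
    (F : ι → Finset N) : ℤ :=
  ∑ S : Finset ι, (-1 : ℤ) ^ S.card *
    M.r (if S.Nonempty then S.inf F else Finset.univ.sup F)

/-- `M` is `n`-flat if `Δ(C) ≤ 0` for every family `C` of at most `n` flats. -/
def NFlat (M : FinMatroid N) (n : ℕ) : Prop :=
  ∀ (ι : Type) (_ : Fintype ι) (_ : DecidableEq ι) (F : ι → Finset N),
    Fintype.card ι ≤ n → (∀ i, M.IsFlat (F i)) → M.delta F ≤ 0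

/-- `M` is totally flat if `Δ(C) ≤ 0` for every finite family `C` of flats. -/
def TotallyFlat (M : FinMatroid N) : Prop :=
  ∀ (ι : Type) (_ : Fintype ι) (_ : DecidableEq ι) (F : ι → Finset N),
    (∀ i, M.IsFlat (F i)) → M.delta F ≤ 0

/-- `r(A/B) := r(A ∪ B) − r(B)`, the rank of `A` after contracting `B`. -/
def relRk (M : FinMatroid N) (A B : Finset N) : ℤ :=
  M.r (A ∪ B) - M.r B

/-- `B₀` is the pseudointersection of `A` and `B`: a flat `B₀ ⊆ B` such that for every
flat `B₁ ⊆ B`, `r(A/B₁) = r(A/B)` if and only if `B₀ ⊆ B₁`. -/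
def IsPseudoInter (M : FinMatroid N) (A B B₀ : Finset N) : Prop :=
  M.IsFlat B₀ ∧ B₀ ⊆ B ∧
    ∀ B₁, M.IsFlat B₁ → B₁ ⊆ B → (M.relRk A B₁ = M.relRk A B ↔ B₀ ⊆ B₁)

/-- `M` is pseudomodular if the pseudointersection of `A` and `B` exists for
all flats `A`, `B`. -/
def Pseudomodular (M : FinMatroid N) : Prop :=
  ∀ A B, M.IsFlat A → M.IsFlat B → ∃ B₀, M.IsPseudoInter A B B₀

/-- The closure of `A`: the smallest flat containing `A`, i.e. the intersection
of all flats containing `A`. -/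
def cl (M : FinMatroid N) (A : Finset N) : Finset N :=
  Finset.univ.filter (fun x => ∀ F : Finset N, M.IsFlat F → A ⊆ F → x ∈ F)

/-- A set `S` is cyclic if removing any element of `S` does not change its rank. -/
def Cyclic (M : FinMatroid N) (S : Finset N) : Prop :=
  ∀ n ∈ S, M.r (S.erase n) = M.r S

/-- A circuit is a minimal dependent set: it is dependent, and every proper
subset is independent. -/
def IsCircuit (M : FinMatroid N) (S : Finset N) : Prop :=
  M.r S < (S.card : ℤ) ∧ ∀ T ⊂ S, M.r T = (T.card : ℤ)

end FinMatroid

namespace FinMatroid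

variable {N : Type} [Fintype N] [DecidableEq N] (M : FinMatroid N)

lemma flat_insert_lt {G S : Finset N} (hG : M.IsFlat G) (hS : S ⊆ G)
    {x : N} (hx : x ∉ G) : M.r S < M.r (insert x S) := by
  have h := M.submodular (insert x S) G
  have hu : insert x S ∪ G = insert x G := by
    rw [Finset.insert_union, Finset.union_eq_right.mpr hS]
  have hi : insert x S ∩ G = S := by
    ext y
    simp only [Finset.mem_inter, Finset.mem_insert]
    constructor
    · rintro ⟨rfl | hy, hyG⟩
      · exact absurd hyG hx
      · exact hy
    · exact fun hy => ⟨Or.inr hy, hS hy⟩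
  rw [hu, hi] at h
  have := hG x hx
  linarith

lemma univ_isFlat : M.IsFlat Finset.univ := fun n hn => absurd (Finset.mem_univ n) hn

lemma subset_cl (A : Finset N) : A ⊆ M.cl A := by
  intro x hx
  simp only [cl, Finset.mem_filter, Finset.mem_univ, true_and]
  exact fun F _ hAF => hAF hx

lemma cl_subset {A F : Finset N} (hF : M.IsFlat F) (hAF : A ⊆ F) : M.cl A ⊆ F := by
  intro x hx
  simp only [cl, Finset.mem_filter] at hx
  exact hx.2 F hF hAF

lemma cl_isFlat (A : Finset N) : M.IsFlat (M.cl A) := by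
  intro x hx
  simp only [cl, Finset.mem_filter, Finset.mem_univ, true_and] at hx
  push_neg at hx
  obtain ⟨G, hG, hAG, hxG⟩ := hx
  exact M.flat_insert_lt hG (M.cl_subset hG hAG) hxG

lemma inter_isFlat {A B : Finset N} (hA : M.IsFlat A) (hB : M.IsFlat B) :
    M.IsFlat (A ∩ B) := by
  intro x hx
  by_cases hxA : x ∈ A
  · have hxB : x ∉ B := fun h => hx (Finset.mem_inter.mpr ⟨hxA, h⟩)
    exact M.flat_insert_lt hB Finset.inter_subset_right hxB
  · exact M.flat_insert_lt hA Finset.inter_subset_left hxA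

lemma r_union_of (A B : Finset N) (h : ∀ x ∈ B, M.r (insert x A) = M.r A) :
    M.r (A ∪ B) = M.r A := by
  induction B using Finset.induction_on with
  | empty => rw [Finset.union_empty]
  | @insert x B hxB ih =>
    have hAB : M.r (A ∪ B) = M.r A := ih (fun y hy => h y (Finset.mem_insert_of_mem hy))
    have hx : M.r (insert x A) = M.r A := h x (Finset.mem_insert_self x B)
    have hsub := M.submodular (A ∪ B) (insert x A)
    have hu : (A ∪ B) ∪ insert x A = insert x (A ∪ B) := by
      rw [Finset.union_insert, Finset.union_eq_left.mpr Finset.subset_union_left]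
    have hi : M.r A ≤ M.r ((A ∪ B) ∩ insert x A) :=
      M.r_mono (Finset.subset_inter Finset.subset_union_left (Finset.subset_insert x A))
    rw [hu] at hsub
    have hmono : M.r A ≤ M.r (A ∪ insert x B) := M.r_mono Finset.subset_union_left
    rw [Finset.union_insert]
    have hle : M.r (insert x (A ∪ B)) ≤ M.r A := by linarith
    rw [Finset.union_insert] at hmono
    linarith

lemma r_cl (A : Finset N) : M.r (M.cl A) = M.r A := by
  set E := A ∪ Finset.univ.filter (fun x => M.r (insert x A) = M.r A) with hE
  have hrE : M.r E = M.r A :=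
    M.r_union_of A _ (fun x hx => (Finset.mem_filter.mp hx).2)
  have hflat : M.IsFlat E := by
    intro x hxE
    have hxA : x ∉ A := fun h => hxE (Finset.mem_union_left _ h)
    have hne : M.r (insert x A) ≠ M.r A := fun h =>
      hxE (Finset.mem_union_right _ (Finset.mem_filter.mpr ⟨Finset.mem_univ x, h⟩))
    have hlt : M.r A < M.r (insert x A) :=
      lt_of_le_of_ne (M.r_mono (Finset.subset_insert x A)) (Ne.symm hne)
    calc M.r E = M.r A := hrE
      _ < M.r (insert x A) := hlt
      _ ≤ M.r (insert x E) :=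
        M.r_mono (Finset.insert_subset_insert x Finset.subset_union_left)
  have h1 : M.cl A ⊆ E := M.cl_subset hflat Finset.subset_union_left
  have h2 := M.r_mono h1
  have h3 := M.r_mono (M.subset_cl A)
  omega

lemma key_rank (Fj V : Finset N) :
    M.r (Fj ∪ V) + M.r (Fj ∩ M.cl V) ≤ M.r Fj + M.r ((Fj ∩ M.cl V) ∪ V) := by
  set L := M.cl V with hL
  have hVL : V ⊆ L := M.subset_cl V
  have hrL : M.r L = M.r V := M.r_cl V
  have h1 : M.r ((Fj ∩ L) ∪ V) = M.r V := by
    apply le_antisymm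
    · calc M.r ((Fj ∩ L) ∪ V) ≤ M.r L :=
            M.r_mono (Finset.union_subset Finset.inter_subset_right hVL)
        _ = M.r V := hrL
    · exact M.r_mono Finset.subset_union_right
  have h2 : M.r (Fj ∪ V) ≤ M.r (Fj ∪ L) :=
    M.r_mono (Finset.union_subset_union_right hVL)
  have h3 := M.submodular Fj L
  linarith

lemma delta_step {ι : Type} [Fintype ι] [DecidableEq ι] (F : ι → Finset N) (j : ι) :
    M.delta F ≤
      M.delta (Function.update F j (F j ∩ M.cl ((Finset.univ.erase j).sup F))) := by
  classical
  set V : Finset N := (Finset.univ.erase j).sup F with hV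
  set L : Finset N := M.cl V with hL
  set F' : ι → Finset N := Function.update F j (F j ∩ L) with hF'
  have hFj' : F' j = F j ∩ L := Function.update_self j _ F
  have hFi' : ∀ i, i ≠ j → F' i = F i := fun i hi => Function.update_of_ne hi _ F
  have hsupV : (Finset.univ.erase j).sup F' = V := by
    rw [hV]
    exact Finset.sup_congr rfl (fun i hi => hFi' i (Finset.mem_erase.mp hi).1)
  have hVL : V ⊆ L := M.subset_cl V
  have hsame : ∀ S : Finset ι, S ≠ ∅ → S ≠ {j} → S.inf F' = S.inf F := by
    intro S hS0 hSj
    by_cases hjS : j ∈ S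
    · have hSe : (S.erase j).Nonempty := by
        rw [Finset.nonempty_iff_ne_empty]
        intro h
        rcases (Finset.erase_eq_empty_iff S j).mp h with h | h
        · exact hS0 h
        · exact hSj h
      obtain ⟨i, hi⟩ := hSe
      have hij : i ≠ j := (Finset.mem_erase.mp hi).1
      have hXL : (S.erase j).inf F ⊆ L := by
        have ha : (S.erase j).inf F ≤ F i := Finset.inf_le hi
        have hb : F i ≤ V := Finset.le_sup (Finset.mem_erase.mpr ⟨hij, Finset.mem_univ i⟩)
        exact subset_trans (Finset.le_iff_subset.mp (le_trans ha hb)) hVL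
      have hinf' : (S.erase j).inf F' = (S.erase j).inf F :=
        Finset.inf_congr rfl (fun k hk => hFi' k (Finset.mem_erase.mp hk).1)
      rw [← Finset.insert_erase hjS, Finset.inf_insert, Finset.inf_insert, hinf', hFj']
      show F j ∩ L ∩ (S.erase j).inf F = F j ∩ (S.erase j).inf F
      rw [Finset.inter_assoc, Finset.inter_eq_right.mpr hXL]
    · exact Finset.inf_congr rfl (fun k hk => hFi' k (fun h => hjS (h ▸ hk)))
  have hU : Finset.univ.sup F = F j ∪ V := by
    conv_lhs => rw [← Finset.insert_erase (Finset.mem_univ j)]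
    rw [Finset.sup_insert, ← hV, Finset.sup_eq_union]
  have hU' : Finset.univ.sup F' = (F j ∩ L) ∪ V := by
    conv_lhs => rw [← Finset.insert_erase (Finset.mem_univ j)]
    rw [Finset.sup_insert, hsupV, hFj', Finset.sup_eq_union]
  have main : 0 ≤ M.delta F' - M.delta F := by
    have expand : M.delta F' - M.delta F = ∑ S : Finset ι,
        ((-1 : ℤ) ^ S.card * M.r (if S.Nonempty then S.inf F' else Finset.univ.sup F')
          - (-1 : ℤ) ^ S.card * M.r (if S.Nonempty then S.inf F else Finset.univ.sup F)) := by
      simp only [delta, ← Finset.sum_sub_distrib]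
    rw [expand]
    have hzero : ∑ S : Finset ι,
        ((-1 : ℤ) ^ S.card * M.r (if S.Nonempty then S.inf F' else Finset.univ.sup F')
          - (-1 : ℤ) ^ S.card * M.r (if S.Nonempty then S.inf F else Finset.univ.sup F))
        = ∑ S ∈ ({∅, {j}} : Finset (Finset ι)),
        ((-1 : ℤ) ^ S.card * M.r (if S.Nonempty then S.inf F' else Finset.univ.sup F')
          - (-1 : ℤ) ^ S.card * M.r (if S.Nonempty then S.inf F else Finset.univ.sup F)) := by
      refine (Finset.sum_subset (Finset.subset_univ _) ?_).symm
      intro S _ hS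
      simp only [Finset.mem_insert, Finset.mem_singleton] at hS
      push_neg at hS
      have hSne : S.Nonempty := hS.1
      rw [if_pos hSne, if_pos hSne, hsame S hS.1.ne_empty hS.2]
      ring
    rw [hzero, Finset.sum_pair (Ne.symm (Finset.singleton_ne_empty j))]
    have hne : ¬ (∅ : Finset ι).Nonempty := Finset.not_nonempty_empty
    have hje : ({j} : Finset ι).Nonempty := Finset.singleton_nonempty j
    rw [if_neg hne, if_neg hne, if_pos hje, if_pos hje,
      Finset.inf_singleton, Finset.inf_singleton, hFj', hU, hU']
    simp only [Finset.card_empty, Finset.card_singleton, pow_zero, pow_one, one_mul]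
    have hk := M.key_rank (F j) V
    rw [← hL] at hk
    linarith
  linarith

lemma delta_aux {ι : Type} [Fintype ι] [DecidableEq ι] (n : ℕ) :
    ∀ F : ι → Finset N, (∑ i, (F i).card) ≤ n → (∀ i, M.IsFlat (F i)) →
    ∃ F' : ι → Finset N, (∀ i, M.IsFlat (F' i)) ∧ M.delta F ≤ M.delta F' ∧
      ∀ i, F' i ⊆ M.cl ((Finset.univ.erase i).sup F') := by
  induction n with
  | zero =>
    intro F hn hF
    refine ⟨F, hF, le_rfl, fun i => ?_⟩
    have : (F i).card = 0 := by
      have h2 : (F i).card ≤ ∑ k, (F k).card :=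
        Finset.single_le_sum (f := fun k => (F k).card) (fun k _ => Nat.zero_le _) (Finset.mem_univ i)
      omega
    rw [Finset.card_eq_zero.mp this]
    exact Finset.empty_subset _
  | succ n ih =>
    intro F hn hF
    by_cases hall : ∀ i, F i ⊆ M.cl ((Finset.univ.erase i).sup F)
    · exact ⟨F, hF, le_rfl, hall⟩
    · push_neg at hall
      obtain ⟨j, hj⟩ := hall
      set L := M.cl ((Finset.univ.erase j).sup F) with hL
      set F' := Function.update F j (F j ∩ L) with hF'def
      have hFj' : F' j = F j ∩ L := Function.update_self j _ F
      have hFi' : ∀ i, i ≠ j → F' i = F i := fun i hi => Function.update_of_ne hi _ F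
      have hflat' : ∀ i, M.IsFlat (F' i) := by
        intro i
        by_cases h : i = j
        · subst h
          rw [hFj']
          exact M.inter_isFlat (hF i) (M.cl_isFlat _)
        · rw [hFi' i h]; exact hF i
      obtain ⟨x, hxFj, hxL⟩ := Finset.not_subset.mp hj
      have hss : F j ∩ L ⊂ F j := by
        refine Finset.ssubset_iff_subset_ne.mpr ⟨Finset.inter_subset_left, fun h => hxL ?_⟩
        have hsub : F j ⊆ L := by rw [← h]; exact Finset.inter_subset_right
        exact hsub hxFj
      have hlt : (F' j).card < (F j).card := by
        rw [hFj']; exact Finset.card_lt_card hss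
      have hsum : ∑ i, (F' i).card < ∑ i, (F i).card := by
        apply Finset.sum_lt_sum
        · intro i _
          by_cases h : i = j
          · subst h; exact hlt.le
          · rw [hFi' i h]
        · exact ⟨j, Finset.mem_univ j, hlt⟩
      obtain ⟨F'', h1, h2, h3⟩ := ih F' (by omega) hflat'
      exact ⟨F'', h1, le_trans (M.delta_step F j) h2, h3⟩

end FinMatroid

/-- For any finite family `C` of flats of a matroid `M` with `|C| > 1`, there is a
family `C'` of the same cardinality, with `Δ(C') ≥ Δ(C)`, such that every member of
`C'` is contained in the closure of the union of the other members. -/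
theorem delta_le_delta_contained {N : Type} [Fintype N] [DecidableEq N]
    (M : FinMatroid N) {ι : Type} [Fintype ι] [DecidableEq ι]
    (F : ι → Finset N) (hF : ∀ i, M.IsFlat (F i)) (hcard : 1 < Fintype.card ι) :
    ∃ F' : ι → Finset N, (∀ i, M.IsFlat (F' i)) ∧ M.delta F ≤ M.delta F' ∧
      ∀ i, F' i ⊆ M.cl ((Finset.univ.erase i).sup F') :=
  M.delta_aux (∑ i, (F i).card) F le_rfl hF
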